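/- Let G = (V,E) be a finite simple undirected graph with positive edge weights and unique shortest paths, let s, v, t be vertices with d_G(v,t) ≤ d_G(v,s), and let f ∈ E be an edge such that s and v are connected in G − f and f does not lie on the unique shortest path π(s,t). Then d_G(s,t) + d_{G−f}(v,t) ≤ 5 · d_{G−f}(s,v). (Case 3 in the proof of Lemma 3.1.) -/

import Mathlib

open scoped ENNReal

variable {V : Type*}

/-- The total weight of a walk: the sum of the weights of its edges (in `ℝ≥0∞`). -/
noncomputable def walkWeight {G : SimpleGraph V} (wt : Sym2 V → NNReal)
    {u v : V} (p : G.Walk u v) : ℝ≥0∞ :=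
  (p.edges.map (fun e => (wt e : ℝ≥0∞))).sum

/-- The weighted shortest-path distance: the infimum over all walks from `u` to `v`
of their total weight (in `ℝ≥0∞`, so it is `∞` if `u` and `v` are not connected). -/
noncomputable def wdist (G : SimpleGraph V) (wt : Sym2 V → NNReal) (u v : V) : ℝ≥0∞ :=
  ⨅ p : G.Walk u v, walkWeight wt p

/-- `G` has unique shortest paths: for every pair of connected vertices there is exactly
one walk of minimum total weight. -/
def HasUniqueShortestPaths (G : SimpleGraph V) (wt : Sym2 V → NNReal) : Prop :=
  ∀ u v : V, G.Reachable u v →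
    ∃! p : G.Walk u v, walkWeight wt p = wdist G wt u v


lemma walkWeight_append {G : SimpleGraph V} (wt : Sym2 V → NNReal) {u v w : V}
    (p : G.Walk u v) (q : G.Walk v w) :
    walkWeight wt (p.append q) = walkWeight wt p + walkWeight wt q := by
  simp [walkWeight, SimpleGraph.Walk.edges_append]

lemma walkWeight_reverse {G : SimpleGraph V} (wt : Sym2 V → NNReal) {u v : V}
    (p : G.Walk u v) : walkWeight wt p.reverse = walkWeight wt p := by
  simp [walkWeight, SimpleGraph.Walk.edges_reverse, List.map_reverse, List.sum_reverse]

lemma wdist_symm (G : SimpleGraph V) (wt : Sym2 V → NNReal) (u v : V) :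
    wdist G wt u v = wdist G wt v u := by
  have h : ∀ a b : V, wdist G wt a b ≤ wdist G wt b a := by
    intro a b
    refine le_iInf fun p => ?_
    simpa [walkWeight_reverse, wdist] using iInf_le (fun q : G.Walk a b => walkWeight wt q) p.reverse
  exact le_antisymm (h u v) (h v u)

lemma wdist_triangle (G : SimpleGraph V) (wt : Sym2 V → NNReal) (u v w : V) :
    wdist G wt u w ≤ wdist G wt u v + wdist G wt v w := by
  simp only [wdist, ENNReal.iInf_add]
  refine le_iInf fun p => ?_
  rw [ENNReal.add_iInf]
  refine le_iInf fun q => ?_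
  simpa [walkWeight_append] using
    iInf_le (fun r : G.Walk u w => walkWeight wt r) (p.append q)

lemma wdist_anti {G H : SimpleGraph V} (h : ∀ e ∈ H.edgeSet, e ∈ G.edgeSet)
    (wt : Sym2 V → NNReal) (u v : V) : wdist G wt u v ≤ wdist H wt u v := by
  refine le_iInf fun p => ?_
  have hp : ∀ e ∈ p.edges, e ∈ G.edgeSet := fun e he =>
    h e (SimpleGraph.Walk.edges_subset_edgeSet p he)
  have := iInf_le (fun q : G.Walk u v => walkWeight wt q)
    (p.transfer G hp)
  simpa [walkWeight, wdist, SimpleGraph.Walk.edges_transfer] using this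

theorem stmt8 [Fintype V] [DecidableEq V] (G : SimpleGraph V) (wt : Sym2 V → NNReal)
    (hwt : ∀ e ∈ G.edgeSet, 0 < wt e)
    (huniq : HasUniqueShortestPaths G wt)
    (s v t : V) (hvt : wdist G wt v t ≤ wdist G wt v s)
    (f : Sym2 V) (hf : f ∈ G.edgeSet)
    (hconn : (G.deleteEdges {f}).Reachable s v)
    (qst : G.Walk s t) (hqst : walkWeight wt qst = wdist G wt s t)
    (hfq : f ∉ qst.edges) :
    wdist G wt s t + wdist (G.deleteEdges {f}) wt v t ≤
      5 * wdist (G.deleteEdges {f}) wt s v := by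
  set G' := G.deleteEdges {f} with hG'
  have hsub : ∀ e ∈ G'.edgeSet, e ∈ G.edgeSet := by
    intro e he
    rw [hG', SimpleGraph.edgeSet_deleteEdges] at he
    exact he.1
  -- d'(s,t) ≤ d(s,t) since qst avoids f
  have hq' : ∀ e ∈ qst.edges, e ∈ G'.edgeSet := by
    intro e he
    rw [hG', SimpleGraph.edgeSet_deleteEdges]
    exact ⟨SimpleGraph.Walk.edges_subset_edgeSet qst he, by
      simp only [Set.mem_singleton_iff]
      rintro rfl; exact hfq he⟩
  have hdst' : wdist G' wt s t ≤ wdist G wt s t := by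
    rw [← hqst]
    have := iInf_le (fun q : G'.Walk s t => walkWeight wt q) (qst.transfer G' hq')
    simpa [walkWeight, wdist, SimpleGraph.Walk.edges_transfer] using this
  have hmono : ∀ a b : V, wdist G wt a b ≤ wdist G' wt a b := fun a b =>
    wdist_anti hsub wt a b
  have h1 : wdist G wt s t ≤ 2 * wdist G' wt s v := by
    calc wdist G wt s t ≤ wdist G wt s v + wdist G wt v t := wdist_triangle G wt s v t
      _ ≤ wdist G wt s v + wdist G wt v s := by gcongr
      _ = 2 * wdist G wt s v := by rw [wdist_symm G wt v s]; ring
      _ ≤ 2 * wdist G' wt s v := by gcongr; exact hmono s v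
  have h2 : wdist G' wt v t ≤ 3 * wdist G' wt s v := by
    calc wdist G' wt v t ≤ wdist G' wt v s + wdist G' wt s t := wdist_triangle G' wt v s t
      _ ≤ wdist G' wt v s + wdist G wt s t := by gcongr
      _ ≤ wdist G' wt s v + 2 * wdist G' wt s v := by
          rw [wdist_symm G' wt v s]; gcongr
      _ = 3 * wdist G' wt s v := by ring
  calc wdist G wt s t + wdist G' wt v t ≤ 2 * wdist G' wt s v + 3 * wdist G' wt s v := by
        exact add_le_add h1 h2
    _ = 5 * wdist G' wt s v := by ring
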